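/- Every view is dom injective: for every view φ and every φ-constraint c over Val' (i.e., every element of c lies in the range of φ_Asn), the preimage of the strongest domain containing c equals the strongest domain containing the preimage: φ_Asn ⁻¹' ⟦dom(c)⟧ = ⟦dom(φ_Asn ⁻¹' c)⟧. -/
import Mathlib

namespace Stmt4

variable {Var Val Val' : Type*}

/-- The assignment set of a domain. -/
def asn (d : Var → Set Val) : Set (Var → Val) := {a | ∀ x, a x ∈ d x}

/-- A view lifted to assignments. -/
def lift (φ : Var → Val → Val') (a : Var → Val) : Var → Val' := fun x => φ x (a x)

/-- The strongest domain containing a constraint, defined pointwise. -/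
def domOf (c : Set (Var → Val)) : Var → Set Val := fun x => {v | ∃ a ∈ c, a x = v}

/-- Every view is dom injective: for every view `φ` and every `φ`-constraint `c` over `Val'`
(every element of `c` lies in the range of `φ_Asn`), the preimage of the strongest domain
containing `c` equals the strongest domain containing the preimage:
`φ_Asn ⁻¹' ⟦dom(c)⟧ = ⟦dom(φ_Asn ⁻¹' c)⟧`. -/
theorem view_dom_injective (φ : Var → Val → Val')
    (hφ : ∀ x, Function.Injective (φ x))
    (c : Set (Var → Val'))
    (hc : ∀ a ∈ c, a ∈ Set.range (lift φ)) :
    lift φ ⁻¹' asn (domOf c) = asn (domOf (lift φ ⁻¹' c)) := by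
  ext a
  constructor
  · intro h x
    obtain ⟨b, hb, hbx⟩ := h x
    obtain ⟨b', rfl⟩ := hc b hb
    exact ⟨b', hb, hφ x hbx⟩
  · intro h x
    obtain ⟨b, hb, hbx⟩ := h x
    exact ⟨lift φ b, hb, congrArg (φ x) hbx⟩

end Stmt4
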